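/- Let W : X1 × X2 → Y be a MAC on finite alphabets and n a positive integer. For any joint probability distribution P_{X1^n X2^n} on X1^n × X2^n, let Y^n be the output of W^{⊗n} on inputs (X1^n, X2^n), i.e. the joint distribution of (X1^n, X2^n, Y^n) is P(x1^n,x2^n,y^n) = W^{⊗n}(y^n|x1^n,x2^n) P_{X1^n X2^n}(x1^n,x2^n). Then: I(X1^n : Y^n | X2^n) ≤ Σ_{i=1}^n I(X_{1,i} : Y_i | X_{2,i}), I(X2^n : Y^n | X1^n) ≤ Σ_{i=1}^n I(X_{2,i} : Y_i | X_{1,i}), and I((X1^n, X2^n) : Y^n) ≤ Σ_{i=1}^n I((X_{1,i}, X_{2,i}) : Y_i). -/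

import Mathlib

open Finset

/-- The `n`-fold memoryless extension `W^{⊗n}` of a multiple-access channel `W`. -/
def macPow {X1 X2 Y : Type*} (n : ℕ) (W : X1 → X2 → Y → ℝ) :
    (Fin n → X1) → (Fin n → X2) → (Fin n → Y) → ℝ :=
  fun x1 x2 y => ∏ i, W (x1 i) (x2 i) (y i)

/-- Shannon entropy (in bits) of a finitely supported distribution `f`. -/
noncomputable def H2 {T : Type*} [Fintype T] (f : T → ℝ) : ℝ :=
  ∑ t, -(f t * Real.logb 2 (f t))

/-- `I(X1:Y|X2)` for a joint distribution `μ` of `(X1,X2,Y)`, via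
`I(X:Y|Z) = H(X,Z) + H(Y,Z) − H(Z) − H(X,Y,Z)`. -/
noncomputable def miX1YcX2 {X1 X2 Y : Type*} [Fintype X1] [Fintype X2] [Fintype Y]
    (μ : X1 → X2 → Y → ℝ) : ℝ :=
  H2 (fun q : X1 × X2 => ∑ y, μ q.1 q.2 y)
    + H2 (fun q : X2 × Y => ∑ x1, μ x1 q.1 q.2)
    - H2 (fun x2 : X2 => ∑ x1, ∑ y, μ x1 x2 y)
    - H2 (fun q : X1 × X2 × Y => μ q.1 q.2.1 q.2.2)

/-- `I(X2:Y|X1)` for a joint distribution `μ` of `(X1,X2,Y)`. -/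
noncomputable def miX2YcX1 {X1 X2 Y : Type*} [Fintype X1] [Fintype X2] [Fintype Y]
    (μ : X1 → X2 → Y → ℝ) : ℝ :=
  H2 (fun q : X1 × X2 => ∑ y, μ q.1 q.2 y)
    + H2 (fun q : X1 × Y => ∑ x2, μ q.1 x2 q.2)
    - H2 (fun x1 : X1 => ∑ x2, ∑ y, μ x1 x2 y)
    - H2 (fun q : X1 × X2 × Y => μ q.1 q.2.1 q.2.2)

/-- `I((X1,X2):Y)` for a joint distribution `μ` of `(X1,X2,Y)`, via
`I(X:Y) = H(X) + H(Y) − H(X,Y)`. -/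
noncomputable def miX1X2Y {X1 X2 Y : Type*} [Fintype X1] [Fintype X2] [Fintype Y]
    (μ : X1 → X2 → Y → ℝ) : ℝ :=
  H2 (fun q : X1 × X2 => ∑ y, μ q.1 q.2 y)
    + H2 (fun y : Y => ∑ x1, ∑ x2, μ x1 x2 y)
    - H2 (fun q : X1 × X2 × Y => μ q.1 q.2.1 q.2.2)

/-- The joint distribution of the `i`-th coordinates `(X_{1,i}, X_{2,i}, Y_i)` under
a joint distribution `μ` of `(X1^n, X2^n, Y^n)`. -/
noncomputable def margAt {X1 X2 Y : Type*} [Fintype X1] [Fintype X2] [Fintype Y]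
    [DecidableEq X1] [DecidableEq X2] [DecidableEq Y] {n : ℕ}
    (μ : (Fin n → X1) → (Fin n → X2) → (Fin n → Y) → ℝ) (i : Fin n) :
    X1 → X2 → Y → ℝ :=
  fun a b c => ∑ x1, ∑ x2, ∑ y,
    if x1 i = a ∧ x2 i = b ∧ y i = c then μ x1 x2 y else 0

/-! ### Auxiliary lemmas -/

section Aux

lemma gibbs {T : Type*} [Fintype T] (p q : T → ℝ) (hp0 : ∀ t, 0 ≤ p t) (hq0 : ∀ t, 0 ≤ q t)
    (hpq : ∀ t, 0 < p t → 0 < q t) (hp1 : ∑ t, p t = 1) (hq1 : ∑ t, q t ≤ 1) :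
    H2 p ≤ ∑ t, -(p t * Real.logb 2 (q t)) := by
  have key : ∑ t, (p t * Real.log (q t) - p t * Real.log (p t)) ≤ 0 := by
    have h1 : ∀ t, p t * Real.log (q t) - p t * Real.log (p t) ≤ q t - p t := by
      intro t
      rcases eq_or_lt_of_le (hp0 t) with h | h
      · simp [← h]
        exact hq0 t
      · have hq := hpq t h
        have hlog : Real.log (q t / p t) ≤ q t / p t - 1 :=
          Real.log_le_sub_one_of_pos (div_pos hq h)
        rw [Real.log_div (ne_of_gt hq) (ne_of_gt h)] at hlog
        have := mul_le_mul_of_nonneg_left hlog (le_of_lt h)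
        calc p t * Real.log (q t) - p t * Real.log (p t)
            = p t * (Real.log (q t) - Real.log (p t)) := by ring
          _ ≤ p t * (q t / p t - 1) := this
          _ = q t - p t := by field_simp
    calc ∑ t, (p t * Real.log (q t) - p t * Real.log (p t)) ≤ ∑ t, (q t - p t) :=
        Finset.sum_le_sum (fun t _ => h1 t)
      _ = (∑ t, q t) - 1 := by rw [Finset.sum_sub_distrib, hp1]
      _ ≤ 0 := by linarith
  have hlog2 : (0:ℝ) < Real.log 2 := Real.log_pos one_lt_two
  have h2 : H2 p - ∑ t, -(p t * Real.logb 2 (q t))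
      = (∑ t, (p t * Real.log (q t) - p t * Real.log (p t))) / Real.log 2 := by
    rw [H2, ← Finset.sum_sub_distrib, Finset.sum_div]
    refine Finset.sum_congr rfl fun t _ => ?_
    simp only [Real.logb]
    ring
  have h3 : (∑ t, (p t * Real.log (q t) - p t * Real.log (p t))) / Real.log 2 ≤ 0 :=
    div_nonpos_iff.mpr (Or.inr ⟨key, hlog2.le⟩)
  linarith

lemma chain2 {A B : Type*} [Fintype A] [Fintype B] (μ : A → B → ℝ) (k : A → B → ℝ)
    (h0 : ∀ a b, 0 ≤ μ a b) (hfac : ∀ a b, μ a b = k a b * ∑ b', μ a b') :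
    ∑ a, ∑ b, -(μ a b * Real.logb 2 (k a b))
      = H2 (fun q : A × B => μ q.1 q.2) - H2 (fun a => ∑ b, μ a b) := by
  have hterm : ∀ a b, -(μ a b * Real.logb 2 (k a b))
      = -(μ a b * Real.logb 2 (μ a b)) + μ a b * Real.logb 2 (∑ b', μ a b') := by
    intro a b
    rcases eq_or_lt_of_le (h0 a b) with h | h
    · simp [← h]
    · have hrow : 0 < ∑ b', μ a b' :=
        lt_of_lt_of_le h (Finset.single_le_sum (fun b' _ => h0 a b') (Finset.mem_univ b))
      have hk : k a b = μ a b / (∑ b', μ a b') := by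
        rw [eq_div_iff (ne_of_gt hrow)]
        exact (hfac a b).symm
      rw [hk, Real.logb_div (ne_of_gt h) (ne_of_gt hrow)]
      ring
  calc ∑ a, ∑ b, -(μ a b * Real.logb 2 (k a b))
      = ∑ a, ∑ b, (-(μ a b * Real.logb 2 (μ a b)) + μ a b * Real.logb 2 (∑ b', μ a b')) :=
        Finset.sum_congr rfl fun a _ => Finset.sum_congr rfl fun b _ => hterm a b
    _ = (∑ a, ∑ b, -(μ a b * Real.logb 2 (μ a b)))
        + ∑ a, (∑ b, μ a b) * Real.logb 2 (∑ b', μ a b') := by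
        rw [← Finset.sum_add_distrib]
        refine Finset.sum_congr rfl fun a _ => ?_
        rw [Finset.sum_add_distrib, Finset.sum_mul]
    _ = H2 (fun q : A × B => μ q.1 q.2) - H2 (fun a => ∑ b, μ a b) := by
        rw [H2, H2, Fintype.sum_prod_type]
        simp only [neg_mul]
        rw [Finset.sum_neg_distrib]
        ring

lemma sum12_comm {A B C M : Type*} [AddCommMonoid M]
    [Fintype A] [Fintype B] [Fintype C] (f : A → B → C → M) :
    ∑ a, ∑ b, ∑ c, f a b c = ∑ c, ∑ a, ∑ b, f a b c := by
  have h1 : ∑ p : A × B, ∑ c, f p.1 p.2 c = ∑ a, ∑ b, ∑ c, f a b c := by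
    simp only [Fintype.sum_prod_type]
  have h2 : ∑ c, ∑ p : A × B, f p.1 p.2 c = ∑ c, ∑ a, ∑ b, f a b c := by
    simp only [Fintype.sum_prod_type]
  rw [← h1, ← h2, Finset.sum_comm]

lemma sum21_comm {A B C M : Type*} [AddCommMonoid M]
    [Fintype A] [Fintype B] [Fintype C] (f : A → B → C → M) :
    ∑ a, ∑ b, ∑ c, f a b c = ∑ b, ∑ c, ∑ a, f a b c := by
  have h1 : ∑ a, ∑ p : B × C, f a p.1 p.2 = ∑ a, ∑ b, ∑ c, f a b c := by
    simp only [Fintype.sum_prod_type]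
  have h2 : ∑ p : B × C, ∑ a, f a p.1 p.2 = ∑ b, ∑ c, ∑ a, f a b c := by
    simp only [Fintype.sum_prod_type]
  rw [← h1, ← h2, Finset.sum_comm]

lemma sum13_comm {A B C D M : Type*} [AddCommMonoid M]
    [Fintype A] [Fintype B] [Fintype C] [Fintype D] (f : A → B → C → D → M) :
    ∑ a, ∑ b, ∑ c, ∑ d, f a b c d = ∑ b, ∑ c, ∑ d, ∑ a, f a b c d := by
  have h1 : ∑ a, ∑ p : B × C × D, f a p.1 p.2.1 p.2.2 = ∑ a, ∑ b, ∑ c, ∑ d, f a b c d := by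
    simp only [Fintype.sum_prod_type]
  have h2 : ∑ p : B × C × D, ∑ a, f a p.1 p.2.1 p.2.2 = ∑ b, ∑ c, ∑ d, ∑ a, f a b c d := by
    simp only [Fintype.sum_prod_type]
  rw [← h1, ← h2, Finset.sum_comm]

lemma sum31_comm {A B C D M : Type*} [AddCommMonoid M]
    [Fintype A] [Fintype B] [Fintype C] [Fintype D] (f : A → B → C → D → M) :
    ∑ a, ∑ b, ∑ c, ∑ d, f a b c d = ∑ d, ∑ a, ∑ b, ∑ c, f a b c d := by
  have h1 : ∑ p : A × B × C, ∑ d, f p.1 p.2.1 p.2.2 d = ∑ a, ∑ b, ∑ c, ∑ d, f a b c d := by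
    simp only [Fintype.sum_prod_type]
  have h2 : ∑ d, ∑ p : A × B × C, f p.1 p.2.1 p.2.2 d = ∑ d, ∑ a, ∑ b, ∑ c, f a b c d := by
    simp only [Fintype.sum_prod_type]
  rw [← h1, ← h2, Finset.sum_comm]

lemma sum22_comm {A B C D M : Type*} [AddCommMonoid M]
    [Fintype A] [Fintype B] [Fintype C] [Fintype D]
    (f : A → B → C → D → M) :
    ∑ a, ∑ b, ∑ c, ∑ d, f a b c d = ∑ c, ∑ d, ∑ a, ∑ b, f a b c d := by
  have h1 : ∑ p : A × B, ∑ q : C × D, f p.1 p.2 q.1 q.2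
      = ∑ a, ∑ b, ∑ c, ∑ d, f a b c d := by
    simp only [Fintype.sum_prod_type]
  have h2 : ∑ q : C × D, ∑ p : A × B, f p.1 p.2 q.1 q.2
      = ∑ c, ∑ d, ∑ a, ∑ b, f a b c d := by
    simp only [Fintype.sum_prod_type]
  rw [← h1, ← h2, Finset.sum_comm]

lemma sum23_comm {A B C D E M : Type*} [AddCommMonoid M]
    [Fintype A] [Fintype B] [Fintype C] [Fintype D] [Fintype E]
    (f : A → B → C → D → E → M) :
    ∑ a, ∑ b, ∑ c, ∑ d, ∑ e, f a b c d e = ∑ c, ∑ d, ∑ e, ∑ a, ∑ b, f a b c d e := by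
  have h1 : ∑ p : A × B, ∑ q : C × D × E, f p.1 p.2 q.1 q.2.1 q.2.2
      = ∑ a, ∑ b, ∑ c, ∑ d, ∑ e, f a b c d e := by
    simp only [Fintype.sum_prod_type]
  have h2 : ∑ q : C × D × E, ∑ p : A × B, f p.1 p.2 q.1 q.2.1 q.2.2
      = ∑ c, ∑ d, ∑ e, ∑ a, ∑ b, f a b c d e := by
    simp only [Fintype.sum_prod_type]
  rw [← h1, ← h2, Finset.sum_comm]

lemma sum33_comm {A B C D E F M : Type*} [AddCommMonoid M]
    [Fintype A] [Fintype B] [Fintype C] [Fintype D] [Fintype E] [Fintype F]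
    (f : A → B → C → D → E → F → M) :
    ∑ a, ∑ b, ∑ c, ∑ d, ∑ e, ∑ g, f a b c d e g
      = ∑ d, ∑ e, ∑ g, ∑ a, ∑ b, ∑ c, f a b c d e g := by
  have h1 : ∑ p : A × B × C, ∑ q : D × E × F, f p.1 p.2.1 p.2.2 q.1 q.2.1 q.2.2
      = ∑ a, ∑ b, ∑ c, ∑ d, ∑ e, ∑ g, f a b c d e g := by
    simp only [Fintype.sum_prod_type]
  have h2 : ∑ q : D × E × F, ∑ p : A × B × C, f p.1 p.2.1 p.2.2 q.1 q.2.1 q.2.2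
      = ∑ d, ∑ e, ∑ g, ∑ a, ∑ b, ∑ c, f a b c d e g := by
    simp only [Fintype.sum_prod_type]
  rw [← h1, ← h2, Finset.sum_comm]

lemma sum2_neg {A B : Type*} [Fintype A] [Fintype B] (f : A → B → ℝ) :
    ∑ a, ∑ b, -(f a b) = -(∑ a, ∑ b, f a b) := by
  simp [Finset.sum_neg_distrib]

lemma sum3_neg {A B C : Type*} [Fintype A] [Fintype B] [Fintype C] (f : A → B → C → ℝ) :
    ∑ a, ∑ b, ∑ c, -(f a b c) = -(∑ a, ∑ b, ∑ c, f a b c) := by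
  simp [Finset.sum_neg_distrib]

lemma sum_ite_head {A : Type*} [Fintype A] [DecidableEq A] (a0 : A) (R : Prop)
    [Decidable R] (t : ℝ) :
    ∑ a : A, (if a0 = a ∧ R then t else 0) = if R then t else 0 := by
  by_cases hR : R <;> simp [hR, Finset.sum_ite_eq]

lemma sum_ite_mid {B : Type*} [Fintype B] [DecidableEq B] (A C : Prop)
    [Decidable A] [Decidable C] (x0 : B) (t : ℝ) :
    ∑ b : B, (if A ∧ x0 = b ∧ C then t else 0) = if A ∧ C then t else 0 := by
  by_cases hA : A <;> by_cases hC : C <;> simp [hA, hC, Finset.sum_ite_eq]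

noncomputable def margY {Y : Type*} [Fintype Y] [DecidableEq Y] {n : ℕ}
    (f : (Fin n → Y) → ℝ) (i : Fin n) : Y → ℝ :=
  fun c => ∑ y, if y i = c then f y else 0

lemma margY_push {Y : Type*} [Fintype Y] [DecidableEq Y] {n : ℕ}
    (f : (Fin n → Y) → ℝ) (i : Fin n) (g : Y → ℝ) :
    ∑ c, margY f i c * g c = ∑ y, f y * g (y i) := by
  unfold margY
  simp only [Finset.sum_mul, ite_mul, zero_mul]
  rw [Finset.sum_comm]
  refine Finset.sum_congr rfl fun y _ => ?_
  simp [Finset.sum_ite_eq]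

noncomputable def pairM {Z Y : Type*} [Fintype Z] [Fintype Y] [DecidableEq Z] [DecidableEq Y]
    {n : ℕ} (ν : (Fin n → Z) → (Fin n → Y) → ℝ) (i : Fin n) : Z → Y → ℝ :=
  fun b c => ∑ z, ∑ y, if z i = b ∧ y i = c then ν z y else 0

lemma pairM_push {Z Y : Type*} [Fintype Z] [Fintype Y] [DecidableEq Z] [DecidableEq Y]
    {n : ℕ} (ν : (Fin n → Z) → (Fin n → Y) → ℝ) (i : Fin n) (g : Z → Y → ℝ) :
    ∑ b, ∑ c, pairM ν i b c * g b c = ∑ z, ∑ y, ν z y * g (z i) (y i) := by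
  unfold pairM
  simp only [Finset.sum_mul, ite_mul, zero_mul]
  rw [sum22_comm]
  refine Finset.sum_congr rfl fun z _ => Finset.sum_congr rfl fun y _ => ?_
  simp [ite_and, Finset.sum_ite_eq]

lemma margAt_push {X1 X2 Y : Type*} [Fintype X1] [Fintype X2] [Fintype Y]
    [DecidableEq X1] [DecidableEq X2] [DecidableEq Y] {n : ℕ}
    (μ : (Fin n → X1) → (Fin n → X2) → (Fin n → Y) → ℝ) (i : Fin n) (g : X1 → X2 → Y → ℝ) :
    ∑ a, ∑ b, ∑ c, margAt μ i a b c * g a b c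
      = ∑ x1, ∑ x2, ∑ y, μ x1 x2 y * g (x1 i) (x2 i) (y i) := by
  unfold margAt
  simp only [Finset.sum_mul, ite_mul, zero_mul]
  rw [sum33_comm]
  refine Finset.sum_congr rfl fun x1 _ => Finset.sum_congr rfl fun x2 _ =>
    Finset.sum_congr rfl fun y _ => ?_
  simp [ite_and, Finset.sum_ite_eq]

lemma sum_pi_ite {Y : Type*} [Fintype Y] [DecidableEq Y] {n : ℕ} (f : Fin n → Y → ℝ)
    (i : Fin n) (c : Y) :
    ∑ y : Fin n → Y, (if y i = c then ∏ j, f j (y j) else 0)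
      = f i c * ∏ j ∈ univ.erase i, ∑ d, f j d := by
  classical
  set g : Fin n → Y → ℝ := fun j d => if j = i then (if d = c then f j d else 0) else f j d
    with hg
  have key : ∀ y : Fin n → Y, (if y i = c then ∏ j, f j (y j) else 0) = ∏ j, g j (y j) := by
    intro y
    have hsplit : ∏ j, g j (y j) = g i (y i) * ∏ j ∈ univ.erase i, g j (y j) :=
      (Finset.mul_prod_erase univ (fun j => g j (y j)) (Finset.mem_univ i)).symm
    have herase : ∏ j ∈ univ.erase i, g j (y j) = ∏ j ∈ univ.erase i, f j (y j) :=
      Finset.prod_congr rfl fun j hj => by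
        simp [hg, (Finset.ne_of_mem_erase hj)]
    rw [hsplit, herase]
    by_cases h : y i = c
    · rw [if_pos h, ← Finset.mul_prod_erase univ (fun j => f j (y j)) (Finset.mem_univ i)]
      simp [hg, h]
    · simp [hg, h]
  rw [Finset.sum_congr rfl fun y _ => key y]
  rw [← Fintype.prod_sum g]
  rw [← Finset.mul_prod_erase univ (fun j => ∑ d, g j d) (Finset.mem_univ i)]
  have h1 : ∑ d, g i d = f i c := by
    simp [hg, Finset.sum_ite_eq']
  have h2 : ∏ j ∈ univ.erase i, (∑ d, g j d) = ∏ j ∈ univ.erase i, ∑ d, f j d :=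
    Finset.prod_congr rfl fun j hj => Finset.sum_congr rfl fun d _ => by
      simp [hg, Finset.ne_of_mem_erase hj]
  rw [h1, h2]

lemma margAt_eq {X1 X2 Y : Type*} [Fintype X1] [Fintype X2] [Fintype Y]
    [DecidableEq X1] [DecidableEq X2] [DecidableEq Y]
    (W : X1 → X2 → Y → ℝ) (hW1 : ∀ x1 x2, ∑ y, W x1 x2 y = 1)
    {n : ℕ} (P : (Fin n → X1) → (Fin n → X2) → ℝ) (i : Fin n) (a : X1) (b : X2) (c : Y) :
    margAt (fun x1 x2 y => macPow n W x1 x2 y * P x1 x2) i a b c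
      = W a b c * ∑ x1, ∑ x2, (if x1 i = a ∧ x2 i = b then P x1 x2 else 0) := by
  unfold margAt macPow
  rw [Finset.mul_sum]
  refine Finset.sum_congr rfl fun x1 _ => ?_
  rw [Finset.mul_sum]
  refine Finset.sum_congr rfl fun x2 _ => ?_
  by_cases hab : x1 i = a ∧ x2 i = b
  · rw [if_pos hab]
    obtain ⟨ha, hb⟩ := hab
    simp only [ha, hb, true_and]
    have h1 : ∀ y : Fin n → Y, (if y i = c then (∏ j, W (x1 j) (x2 j) (y j)) * P x1 x2 else 0)
        = (if y i = c then ∏ j, W (x1 j) (x2 j) (y j) else 0) * P x1 x2 := fun y => by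
      split <;> simp
    rw [Finset.sum_congr rfl fun y _ => h1 y, ← Finset.sum_mul, sum_pi_ite]
    have h2 : ∏ j ∈ univ.erase i, (∑ d, W (x1 j) (x2 j) d) = 1 :=
      Finset.prod_eq_one fun j _ => hW1 _ _
    rw [h2, ha, hb]
    ring
  · rw [if_neg hab, mul_zero]
    refine Finset.sum_eq_zero fun y _ => ?_
    rw [if_neg]
    tauto

lemma margAt_fac {X1 X2 Y : Type*} [Fintype X1] [Fintype X2] [Fintype Y]
    [DecidableEq X1] [DecidableEq X2] [DecidableEq Y]
    (W : X1 → X2 → Y → ℝ) (hW1 : ∀ x1 x2, ∑ y, W x1 x2 y = 1)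
    {n : ℕ} (P : (Fin n → X1) → (Fin n → X2) → ℝ) (i : Fin n) (a : X1) (b : X2) (c : Y) :
    margAt (fun x1 x2 y => macPow n W x1 x2 y * P x1 x2) i a b c
      = W a b c * ∑ c', margAt (fun x1 x2 y => macPow n W x1 x2 y * P x1 x2) i a b c' := by
  have h : ∑ c', margAt (fun x1 x2 y => macPow n W x1 x2 y * P x1 x2) i a b c'
      = ∑ x1, ∑ x2, (if x1 i = a ∧ x2 i = b then P x1 x2 else 0) := by
    rw [Finset.sum_congr rfl fun c' _ => margAt_eq W hW1 P i a b c', ← Finset.sum_mul, hW1]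
    ring
  rw [h, margAt_eq W hW1 P i a b c]

lemma pairM_margAt₂ {X1 X2 Y : Type*} [Fintype X1] [Fintype X2] [Fintype Y]
    [DecidableEq X1] [DecidableEq X2] [DecidableEq Y] {n : ℕ}
    (μ : (Fin n → X1) → (Fin n → X2) → (Fin n → Y) → ℝ) (i : Fin n) (b : X2) (c : Y) :
    pairM (fun x2 y => ∑ x1, μ x1 x2 y) i b c = ∑ a, margAt μ i a b c := by
  unfold pairM margAt
  rw [sum13_comm]
  calc ∑ z, ∑ y, (if z i = b ∧ y i = c then ∑ x1, μ x1 z y else 0)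
      = ∑ z, ∑ y, ∑ x1, (if z i = b ∧ y i = c then μ x1 z y else 0) := by
        refine Finset.sum_congr rfl fun z _ => Finset.sum_congr rfl fun y _ => ?_
        split <;> simp
    _ = ∑ x1, ∑ z, ∑ y, (if z i = b ∧ y i = c then μ x1 z y else 0) :=
        sum12_comm _
    _ = ∑ x1, ∑ x2, ∑ y, ∑ a, (if x1 i = a ∧ x2 i = b ∧ y i = c then μ x1 x2 y else 0) := by
        refine Finset.sum_congr rfl fun x1 _ => Finset.sum_congr rfl fun x2 _ =>
          Finset.sum_congr rfl fun y _ => ?_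
        exact (sum_ite_head (x1 i) _ _).symm

lemma pairM_margAt₁ {X1 X2 Y : Type*} [Fintype X1] [Fintype X2] [Fintype Y]
    [DecidableEq X1] [DecidableEq X2] [DecidableEq Y] {n : ℕ}
    (μ : (Fin n → X1) → (Fin n → X2) → (Fin n → Y) → ℝ) (i : Fin n) (a : X1) (c : Y) :
    pairM (fun x1 y => ∑ x2, μ x1 x2 y) i a c = ∑ b, margAt μ i a b c := by
  unfold pairM margAt
  rw [sum13_comm]
  calc ∑ z, ∑ y, (if z i = a ∧ y i = c then ∑ x2, μ z x2 y else 0)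
      = ∑ z, ∑ y, ∑ x2, (if z i = a ∧ y i = c then μ z x2 y else 0) := by
        refine Finset.sum_congr rfl fun z _ => Finset.sum_congr rfl fun y _ => ?_
        split <;> simp
    _ = ∑ z, ∑ x2, ∑ y, (if z i = a ∧ y i = c then μ z x2 y else 0) :=
        Finset.sum_congr rfl fun z _ => Finset.sum_comm
    _ = ∑ x1, ∑ x2, ∑ y, ∑ b, (if x1 i = a ∧ x2 i = b ∧ y i = c then μ x1 x2 y else 0) := by
        refine Finset.sum_congr rfl fun x1 _ => Finset.sum_congr rfl fun x2 _ =>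
          Finset.sum_congr rfl fun y _ => ?_
        exact (sum_ite_mid _ _ (x2 i) _).symm

lemma margY_margAt {X1 X2 Y : Type*} [Fintype X1] [Fintype X2] [Fintype Y]
    [DecidableEq X1] [DecidableEq X2] [DecidableEq Y] {n : ℕ}
    (μ : (Fin n → X1) → (Fin n → X2) → (Fin n → Y) → ℝ) (i : Fin n) (c : Y) :
    margY (fun y => ∑ x1, ∑ x2, μ x1 x2 y) i c = ∑ a, ∑ b, margAt μ i a b c := by
  unfold margY margAt
  rw [sum23_comm]
  calc ∑ y, (if y i = c then ∑ x1, ∑ x2, μ x1 x2 y else 0)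
      = ∑ y, ∑ x1, ∑ x2, (if y i = c then μ x1 x2 y else 0) := by
        refine Finset.sum_congr rfl fun y _ => ?_
        split <;> simp
    _ = ∑ x1, ∑ x2, ∑ y, (if y i = c then μ x1 x2 y else 0) :=
        sum21_comm _
    _ = ∑ x1, ∑ x2, ∑ y, ∑ a, ∑ b, (if x1 i = a ∧ x2 i = b ∧ y i = c then μ x1 x2 y else 0) := by
        refine Finset.sum_congr rfl fun x1 _ => Finset.sum_congr rfl fun x2 _ =>
          Finset.sum_congr rfl fun y _ => ?_
        have hb : ∀ aa : X1, ∑ b, (if x1 i = aa ∧ x2 i = b ∧ y i = c then μ x1 x2 y else 0)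
            = if x1 i = aa ∧ y i = c then μ x1 x2 y else 0 := by
          intro aa
          have := sum_ite_mid (x1 i = aa) (y i = c) (x2 i) (μ x1 x2 y)
          simpa [and_assoc] using this
        rw [Finset.sum_congr rfl fun aa _ => hb aa, sum_ite_head]

lemma subadd_H2 {Y : Type*} [Fintype Y] [DecidableEq Y] {n : ℕ}
    (f : (Fin n → Y) → ℝ) (h0 : ∀ y, 0 ≤ f y) (h1 : ∑ y, f y = 1) :
    H2 f ≤ ∑ i, H2 (margY f i) := by
  have hm0 : ∀ (i : Fin n) c, 0 ≤ margY f i c := by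
    intro i c
    refine Finset.sum_nonneg fun y _ => ?_
    split
    exacts [h0 y, le_rfl]
  have hmge : ∀ (i : Fin n) (y : Fin n → Y), f y ≤ margY f i (y i) := by
    intro i y
    have h := Finset.single_le_sum (f := fun y' => if y' i = y i then f y' else 0)
      (fun y' _ => by (try dsimp only); split; exacts [h0 y', le_rfl]) (Finset.mem_univ y)
    simpa [margY] using h
  have hmsum : ∀ i : Fin n, ∑ c, margY f i c = 1 := by
    intro i
    unfold margY
    rw [Finset.sum_comm]
    calc ∑ y, ∑ c, (if y i = c then f y else 0) = ∑ y, f y := by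
          refine Finset.sum_congr rfl fun y _ => ?_
          simp [Finset.sum_ite_eq]
      _ = 1 := h1
  have hq0 : ∀ y : Fin n → Y, 0 ≤ ∏ i, margY f i (y i) :=
    fun y => Finset.prod_nonneg fun i _ => hm0 i (y i)
  have hpq : ∀ y : Fin n → Y, 0 < f y → 0 < ∏ i, margY f i (y i) :=
    fun y hy => Finset.prod_pos fun i _ => lt_of_lt_of_le hy (hmge i y)
  have hq1 : ∑ y : Fin n → Y, ∏ i, margY f i (y i) ≤ 1 := by
    rw [← Fintype.prod_sum (fun i c => margY f i c)]
    rw [Finset.prod_congr rfl fun i _ => hmsum i]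
    simp
  have hgibbs := gibbs f (fun y => ∏ i, margY f i (y i)) h0 hq0 hpq h1 hq1
  refine hgibbs.trans (le_of_eq ?_)
  have hsplit : ∀ y : Fin n → Y, -(f y * Real.logb 2 (∏ i, margY f i (y i)))
      = ∑ i, -(f y * Real.logb 2 (margY f i (y i))) := by
    intro y
    rcases eq_or_lt_of_le (h0 y) with h | h
    · simp [← h]
    · rw [Real.logb_prod univ _ (fun i _ => ne_of_gt (lt_of_lt_of_le h (hmge i y)))]
      rw [Finset.mul_sum, ← Finset.sum_neg_distrib]
  rw [Finset.sum_congr rfl fun y _ => hsplit y, Finset.sum_comm]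
  refine Finset.sum_congr rfl fun i _ => ?_
  calc ∑ y, -(f y * Real.logb 2 (margY f i (y i)))
      = -(∑ y, f y * Real.logb 2 (margY f i (y i))) := by rw [Finset.sum_neg_distrib]
    _ = -(∑ c, margY f i c * Real.logb 2 (margY f i c)) := by
        rw [margY_push f i (fun c => Real.logb 2 (margY f i c))]
    _ = H2 (margY f i) := by rw [H2, Finset.sum_neg_distrib]

lemma subadd_H2_cond {Z Y : Type*} [Fintype Z] [Fintype Y] [DecidableEq Z] [DecidableEq Y]
    {n : ℕ} (ν : (Fin n → Z) → (Fin n → Y) → ℝ)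
    (h0 : ∀ z y, 0 ≤ ν z y) (h1 : ∑ z, ∑ y, ν z y = 1) :
    H2 (fun q : (Fin n → Z) × (Fin n → Y) => ν q.1 q.2)
      ≤ H2 (fun z => ∑ y, ν z y)
        + ∑ i, (H2 (fun q : Z × Y => pairM ν i q.1 q.2)
            - H2 (fun b => ∑ c, pairM ν i b c)) := by
  classical
  have hM0 : ∀ (i : Fin n) b c, 0 ≤ pairM ν i b c := by
    intro i b c
    refine Finset.sum_nonneg fun z _ => Finset.sum_nonneg fun y _ => ?_
    split
    exacts [h0 _ _, le_rfl]
  have hMge : ∀ (i : Fin n) z y, ν z y ≤ pairM ν i (z i) (y i) := by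
    intro i z y
    have A : ν z y ≤ ∑ y', if z i = z i ∧ y' i = y i then ν z y' else 0 := by
      have h := Finset.single_le_sum
        (f := fun y' => if z i = z i ∧ y' i = y i then ν z y' else 0)
        (fun y' _ => by (try dsimp only); split; exacts [h0 _ _, le_rfl]) (Finset.mem_univ y)
      simpa using h
    refine A.trans ?_
    exact Finset.single_le_sum
      (f := fun z' => ∑ y', if z' i = z i ∧ y' i = y i then ν z' y' else 0)
      (fun z' _ => Finset.sum_nonneg fun y' _ => by (try dsimp only); split; exacts [h0 _ _, le_rfl])
      (Finset.mem_univ z)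
  have hMrow : ∀ (i : Fin n) b c, pairM ν i b c ≤ ∑ c', pairM ν i b c' :=
    fun i b c => Finset.single_le_sum (fun c' _ => hM0 i b c') (Finset.mem_univ c)
  have hr0 : ∀ z, 0 ≤ ∑ y, ν z y := fun z => Finset.sum_nonneg fun y _ => h0 _ _
  set s : Fin n → Z → Y → ℝ := fun i b c => pairM ν i b c / ∑ c', pairM ν i b c' with hsdef
  have hs0 : ∀ i b c, 0 ≤ s i b c := fun i b c =>
    div_nonneg (hM0 i b c) (Finset.sum_nonneg fun c' _ => hM0 i b c')
  have hssum : ∀ i b, ∑ c, s i b c ≤ 1 := by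
    intro i b
    rw [hsdef]
    simp only []
    rcases eq_or_ne (∑ c', pairM ν i b c') 0 with h | h
    · simp [h]
    · rw [← Finset.sum_div, div_self h]
  have hspos : ∀ (i : Fin n) z y, 0 < ν z y → 0 < s i (z i) (y i) := by
    intro i z y h
    have h1' : 0 < pairM ν i (z i) (y i) := lt_of_lt_of_le h (hMge i z y)
    have h2' : 0 < ∑ c', pairM ν i (z i) c' := lt_of_lt_of_le h1' (hMrow i (z i) (y i))
    rw [hsdef]
    exact div_pos h1' h2'
  have hfac : ∀ (i : Fin n) b c, pairM ν i b c = s i b c * ∑ c', pairM ν i b c' := by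
    intro i b c
    rcases eq_or_ne (∑ c', pairM ν i b c') 0 with h | h
    · have hz : pairM ν i b c = 0 :=
        le_antisymm (le_of_le_of_eq (hMrow i b c) h) (hM0 i b c)
      rw [hz, h, mul_zero]
    · rw [hsdef]
      simp only []
      rw [div_mul_cancel₀ _ h]
  have hp1 : ∑ q : (Fin n → Z) × (Fin n → Y), ν q.1 q.2 = 1 := by
    rw [Fintype.sum_prod_type]
    exact h1
  have hq0 : ∀ q : (Fin n → Z) × (Fin n → Y),
      0 ≤ (∑ y, ν q.1 y) * ∏ i, s i (q.1 i) (q.2 i) :=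
    fun q => mul_nonneg (hr0 q.1) (Finset.prod_nonneg fun i _ => hs0 _ _ _)
  have hpq : ∀ q : (Fin n → Z) × (Fin n → Y), 0 < ν q.1 q.2 →
      0 < (∑ y, ν q.1 y) * ∏ i, s i (q.1 i) (q.2 i) := by
    intro q h
    refine mul_pos (lt_of_lt_of_le h
      (Finset.single_le_sum (fun y _ => h0 q.1 y) (Finset.mem_univ q.2))) ?_
    exact Finset.prod_pos fun i _ => hspos i q.1 q.2 h
  have hq1 : ∑ q : (Fin n → Z) × (Fin n → Y),
      (∑ y, ν q.1 y) * ∏ i, s i (q.1 i) (q.2 i) ≤ 1 := by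
    rw [Fintype.sum_prod_type]
    calc ∑ z, ∑ y : Fin n → Y, (∑ y', ν z y') * ∏ i, s i (z i) (y i)
        = ∑ z, (∑ y', ν z y') * ∑ y : Fin n → Y, ∏ i, s i (z i) (y i) := by
          refine Finset.sum_congr rfl fun z _ => ?_
          rw [Finset.mul_sum]
      _ = ∑ z, (∑ y', ν z y') * ∏ i, ∑ c, s i (z i) c := by
          refine Finset.sum_congr rfl fun z _ => ?_
          rw [← Fintype.prod_sum (fun i c => s i (z i) c)]
      _ ≤ ∑ z, (∑ y', ν z y') * 1 := by
          refine Finset.sum_le_sum fun z _ => ?_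
          refine mul_le_mul_of_nonneg_left ?_ (hr0 z)
          exact Finset.prod_le_one (fun i _ => Finset.sum_nonneg fun c _ => hs0 _ _ _)
            (fun i _ => hssum i (z i))
      _ = 1 := by
          simp only [mul_one]
          exact h1
  have hgibbs := gibbs (fun q : (Fin n → Z) × (Fin n → Y) => ν q.1 q.2)
    (fun q => (∑ y, ν q.1 y) * ∏ i, s i (q.1 i) (q.2 i))
    (fun q => h0 q.1 q.2) hq0 hpq hp1 hq1
  refine hgibbs.trans (le_of_eq ?_)
  have hsplit : ∀ (z : Fin n → Z) (y : Fin n → Y),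
      -(ν z y * Real.logb 2 ((∑ y', ν z y') * ∏ i, s i (z i) (y i)))
        = -(ν z y * Real.logb 2 (∑ y', ν z y'))
          + ∑ i, -(ν z y * Real.logb 2 (s i (z i) (y i))) := by
    intro z y
    rcases eq_or_lt_of_le (h0 z y) with h | h
    · simp [← h]
    · have hrpos : 0 < ∑ y', ν z y' :=
        lt_of_lt_of_le h (Finset.single_le_sum (fun y' _ => h0 z y') (Finset.mem_univ y))
      have hsposs : ∀ i : Fin n, 0 < s i (z i) (y i) := fun i => hspos i z y h
      have hprodne : (∏ i, s i (z i) (y i)) ≠ 0 :=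
        ne_of_gt (Finset.prod_pos fun i _ => hsposs i)
      rw [Real.logb_mul (ne_of_gt hrpos) hprodne,
        Real.logb_prod univ _ (fun i _ => ne_of_gt (hsposs i)),
        mul_add, neg_add, Finset.mul_sum, ← Finset.sum_neg_distrib]
  rw [Fintype.sum_prod_type]
  calc ∑ z, ∑ y, -(ν z y * Real.logb 2 ((∑ y', ν z y') * ∏ i, s i (z i) (y i)))
      = ∑ z, ∑ y, (-(ν z y * Real.logb 2 (∑ y', ν z y'))
          + ∑ i, -(ν z y * Real.logb 2 (s i (z i) (y i)))) :=
        Finset.sum_congr rfl fun z _ => Finset.sum_congr rfl fun y _ => hsplit z y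
    _ = (∑ z, ∑ y, -(ν z y * Real.logb 2 (∑ y', ν z y')))
        + ∑ z, ∑ y, ∑ i, -(ν z y * Real.logb 2 (s i (z i) (y i))) := by
        rw [← Finset.sum_add_distrib]
        exact Finset.sum_congr rfl fun z _ => Finset.sum_add_distrib
    _ = H2 (fun z => ∑ y, ν z y)
        + ∑ i, (H2 (fun q : Z × Y => pairM ν i q.1 q.2)
            - H2 (fun b => ∑ c, pairM ν i b c)) := by
        congr 1
        · rw [H2]
          refine Finset.sum_congr rfl fun z _ => ?_
          rw [Finset.sum_neg_distrib, ← Finset.sum_mul]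
        · rw [sum12_comm]
          refine Finset.sum_congr rfl fun i _ => ?_
          have hpush := pairM_push ν i (fun b c => Real.logb 2 (s i b c))
          have hchain := chain2 (pairM ν i) (s i) (hM0 i) (hfac i)
          calc ∑ z, ∑ y, -(ν z y * Real.logb 2 (s i (z i) (y i)))
              = -(∑ z, ∑ y, ν z y * Real.logb 2 (s i (z i) (y i))) := sum2_neg _
            _ = -(∑ b, ∑ c, pairM ν i b c * Real.logb 2 (s i b c)) := by rw [hpush]
            _ = ∑ b, ∑ c, -(pairM ν i b c * Real.logb 2 (s i b c)) := (sum2_neg _).symm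
            _ = H2 (fun q : Z × Y => pairM ν i q.1 q.2)
                - H2 (fun b => ∑ c, pairM ν i b c) := hchain

end Aux

/-- Single-letterization bounds: for any joint input distribution `P` on
`X1^n × X2^n` and `Y^n` the output of `W^{⊗n}`,
`I(X1^n:Y^n|X2^n) ≤ Σ_i I(X_{1,i}:Y_i|X_{2,i})`,
`I(X2^n:Y^n|X1^n) ≤ Σ_i I(X_{2,i}:Y_i|X_{1,i})` and
`I((X1^n,X2^n):Y^n) ≤ Σ_i I((X_{1,i},X_{2,i}):Y_i)`. -/
theorem multiletter_mutualInfo_le {X1 X2 Y : Type*}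
    [Fintype X1] [Fintype X2] [Fintype Y]
    [DecidableEq X1] [DecidableEq X2] [DecidableEq Y]
    (W : X1 → X2 → Y → ℝ)
    (hW0 : ∀ x1 x2 y, 0 ≤ W x1 x2 y)
    (hW1 : ∀ x1 x2, ∑ y, W x1 x2 y = 1)
    (n : ℕ) (hn : 0 < n)
    (P : (Fin n → X1) → (Fin n → X2) → ℝ)
    (hP0 : ∀ x1 x2, 0 ≤ P x1 x2)
    (hP1 : ∑ x1, ∑ x2, P x1 x2 = 1) :
    miX1YcX2 (fun x1 x2 y => macPow n W x1 x2 y * P x1 x2) ≤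
        ∑ i, miX1YcX2 (margAt (fun x1 x2 y => macPow n W x1 x2 y * P x1 x2) i) ∧
    miX2YcX1 (fun x1 x2 y => macPow n W x1 x2 y * P x1 x2) ≤
        ∑ i, miX2YcX1 (margAt (fun x1 x2 y => macPow n W x1 x2 y * P x1 x2) i) ∧
    miX1X2Y (fun x1 x2 y => macPow n W x1 x2 y * P x1 x2) ≤
        ∑ i, miX1X2Y (margAt (fun x1 x2 y => macPow n W x1 x2 y * P x1 x2) i) := by
  classical
  set μ : (Fin n → X1) → (Fin n → X2) → (Fin n → Y) → ℝ :=
    fun x1 x2 y => macPow n W x1 x2 y * P x1 x2 with hμdef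
  have hμ0 : ∀ x1 x2 y, 0 ≤ μ x1 x2 y := by
    intro x1 x2 y
    rw [hμdef]
    exact mul_nonneg (Finset.prod_nonneg fun j _ => hW0 _ _ _) (hP0 _ _)
  have hmac : ∀ x1 x2, ∑ y : Fin n → Y, macPow n W x1 x2 y = 1 := by
    intro x1 x2
    show ∑ y : Fin n → Y, ∏ j, W (x1 j) (x2 j) (y j) = 1
    rw [← Fintype.prod_sum (fun j d => W (x1 j) (x2 j) d)]
    exact Finset.prod_eq_one fun j _ => hW1 _ _
  have hμy : ∀ x1 x2, ∑ y, μ x1 x2 y = P x1 x2 := by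
    intro x1 x2
    rw [hμdef]
    simp only []
    rw [← Finset.sum_mul, hmac, one_mul]
  have hμ1 : ∑ x1, ∑ x2, ∑ y, μ x1 x2 y = 1 := by
    rw [Finset.sum_congr rfl fun x1 _ => Finset.sum_congr rfl fun x2 _ => hμy x1 x2]
    exact hP1
  have hν0 : ∀ (i : Fin n) a b c, 0 ≤ margAt μ i a b c := by
    intro i a b c
    simp only [margAt]
    refine Finset.sum_nonneg fun x1 _ => Finset.sum_nonneg fun x2 _ =>
      Finset.sum_nonneg fun y _ => ?_
    split
    exacts [hμ0 x1 x2 y, le_rfl]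
  -- chain rule at the multi-letter level
  have hfullfac : ∀ (p : (Fin n → X1) × (Fin n → X2)) (y : Fin n → Y),
      μ p.1 p.2 y = macPow n W p.1 p.2 y * ∑ y', μ p.1 p.2 y' := by
    intro p y
    rw [hμy p.1 p.2, hμdef]
  have hchainF := chain2 (fun (p : (Fin n → X1) × (Fin n → X2)) (y : Fin n → Y) => μ p.1 p.2 y)
    (fun p y => macPow n W p.1 p.2 y) (fun p y => hμ0 p.1 p.2 y) hfullfac
  have hassocF : H2 (fun q : ((Fin n → X1) × (Fin n → X2)) × (Fin n → Y) => μ q.1.1 q.1.2 q.2)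
      = H2 (fun q : (Fin n → X1) × (Fin n → X2) × (Fin n → Y) => μ q.1 q.2.1 q.2.2) := by
    simp only [H2, Fintype.sum_prod_type]
  have hcrossF : ∑ p : (Fin n → X1) × (Fin n → X2), ∑ y,
      -(μ p.1 p.2 y * Real.logb 2 (macPow n W p.1 p.2 y))
      = ∑ i, ∑ a, ∑ b, ∑ c, -(margAt μ i a b c * Real.logb 2 (W a b c)) := by
    rw [Fintype.sum_prod_type]
    have hsplit : ∀ x1 x2 y, -(μ x1 x2 y * Real.logb 2 (macPow n W x1 x2 y))
        = ∑ j, -(μ x1 x2 y * Real.logb 2 (W (x1 j) (x2 j) (y j))) := by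
      intro x1 x2 y
      rcases eq_or_lt_of_le (hμ0 x1 x2 y) with h | h
      · simp [← h]
      · have hprodne : macPow n W x1 x2 y ≠ 0 := by
          intro h0
          rw [hμdef] at h
          simp only [] at h
          rw [h0, zero_mul] at h
          exact lt_irrefl 0 h
        have hfac : ∀ j : Fin n, W (x1 j) (x2 j) (y j) ≠ 0 := by
          intro j
          have hne : (∏ k, W (x1 k) (x2 k) (y k)) ≠ 0 := hprodne
          exact Finset.prod_ne_zero_iff.mp hne j (Finset.mem_univ j)
        have hlb : Real.logb 2 (macPow n W x1 x2 y)
            = ∑ j, Real.logb 2 (W (x1 j) (x2 j) (y j)) := by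
          rw [show macPow n W x1 x2 y = ∏ j, W (x1 j) (x2 j) (y j) from rfl]
          exact Real.logb_prod univ _ (fun j _ => hfac j)
        rw [hlb, Finset.mul_sum, ← Finset.sum_neg_distrib]
    rw [Finset.sum_congr rfl fun x1 _ => Finset.sum_congr rfl fun x2 _ =>
      Finset.sum_congr rfl fun y _ => hsplit x1 x2 y]
    rw [sum31_comm]
    refine Finset.sum_congr rfl fun j _ => ?_
    calc ∑ x1, ∑ x2, ∑ y, -(μ x1 x2 y * Real.logb 2 (W (x1 j) (x2 j) (y j)))
        = -(∑ x1, ∑ x2, ∑ y, μ x1 x2 y * Real.logb 2 (W (x1 j) (x2 j) (y j))) :=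
          sum3_neg _
      _ = -(∑ a, ∑ b, ∑ c, margAt μ j a b c * Real.logb 2 (W a b c)) := by
          rw [margAt_push μ j (fun a b c => Real.logb 2 (W a b c))]
      _ = ∑ a, ∑ b, ∑ c, -(margAt μ j a b c * Real.logb 2 (W a b c)) := (sum3_neg _).symm
  have hfull : H2 (fun q : (Fin n → X1) × (Fin n → X2) × (Fin n → Y) => μ q.1 q.2.1 q.2.2)
      = H2 (fun q : (Fin n → X1) × (Fin n → X2) => ∑ y, μ q.1 q.2 y)
        + ∑ i, ∑ a, ∑ b, ∑ c, -(margAt μ i a b c * Real.logb 2 (W a b c)) := by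
    rw [← hcrossF]
    linarith [hchainF, hassocF]
  -- chain rule at the single-letter level
  have hsingle : ∀ i : Fin n,
      H2 (fun q : X1 × X2 × Y => margAt μ i q.1 q.2.1 q.2.2)
      = H2 (fun q : X1 × X2 => ∑ c, margAt μ i q.1 q.2 c)
        + ∑ a, ∑ b, ∑ c, -(margAt μ i a b c * Real.logb 2 (W a b c)) := by
    intro i
    have hfaci : ∀ (p : X1 × X2) (c : Y),
        margAt μ i p.1 p.2 c = W p.1 p.2 c * ∑ c', margAt μ i p.1 p.2 c' := by
      intro p c
      have h := margAt_fac W hW1 P i p.1 p.2 c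
      rw [← hμdef] at h
      exact h
    have hchain := chain2 (fun (p : X1 × X2) c => margAt μ i p.1 p.2 c)
      (fun p c => W p.1 p.2 c) (fun p c => hν0 i p.1 p.2 c) hfaci
    have hassoc : H2 (fun q : (X1 × X2) × Y => margAt μ i q.1.1 q.1.2 q.2)
        = H2 (fun q : X1 × X2 × Y => margAt μ i q.1 q.2.1 q.2.2) := by
      simp only [H2, Fintype.sum_prod_type]
    have hc : ∑ p : X1 × X2, ∑ c, -(margAt μ i p.1 p.2 c * Real.logb 2 (W p.1 p.2 c))
        = ∑ a, ∑ b, ∑ c, -(margAt μ i a b c * Real.logb 2 (W a b c)) := by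
      rw [Fintype.sum_prod_type]
    linarith [hchain, hassoc, hc]
  refine ⟨?_, ?_, ?_⟩
  · -- Part 1 : I(X1:Y|X2)
    have hν2 : ∀ (z : Fin n → X2) (y : Fin n → Y), (0:ℝ) ≤ ∑ x1, μ x1 z y :=
      fun z y => Finset.sum_nonneg fun x1 _ => hμ0 _ _ _
    have h1 : ∑ z, ∑ y, ∑ x1, μ x1 z y = 1 := by
      rw [show (∑ z, ∑ y, ∑ x1, μ x1 z y) = ∑ x1, ∑ z, ∑ y, μ x1 z y from
        (sum21_comm fun x1 z y => μ x1 z y).symm]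
      exact hμ1
    have hS := subadd_H2_cond (fun x2 y => ∑ x1, μ x1 x2 y) (fun z y => hν2 z y) h1
    have e1 : (fun z => ∑ y, ∑ x1, μ x1 z y) = (fun x2 => ∑ x1, ∑ y, μ x1 x2 y) :=
      funext fun z => Finset.sum_comm
    rw [e1] at hS
    simp only [pairM_margAt₂ μ] at hS
    have e3 : ∀ (i : Fin n) (b : X2),
        (∑ c, ∑ a, margAt μ i a b c) = ∑ a, ∑ c, margAt μ i a b c :=
      fun i b => Finset.sum_comm
    simp only [e3] at hS
    simp only [miX1YcX2]
    have hs : ∀ i : Fin n,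
        H2 (fun q : X1 × X2 => ∑ y, margAt μ i q.1 q.2 y)
          + H2 (fun q : X2 × Y => ∑ x1, margAt μ i x1 q.1 q.2)
          - H2 (fun x2 : X2 => ∑ x1, ∑ y, margAt μ i x1 x2 y)
          - H2 (fun q : X1 × X2 × Y => margAt μ i q.1 q.2.1 q.2.2)
        = (H2 (fun q : X2 × Y => ∑ x1, margAt μ i x1 q.1 q.2)
            - H2 (fun x2 : X2 => ∑ x1, ∑ y, margAt μ i x1 x2 y))
          - ∑ a, ∑ b, ∑ c, -(margAt μ i a b c * Real.logb 2 (W a b c)) := by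
      intro i
      rw [hsingle i]
      ring
    rw [Finset.sum_congr rfl fun i _ => hs i, Finset.sum_sub_distrib, hfull]
    linarith [hS]
  · -- Part 2 : I(X2:Y|X1)
    have hν1 : ∀ (z : Fin n → X1) (y : Fin n → Y), (0:ℝ) ≤ ∑ x2, μ z x2 y :=
      fun z y => Finset.sum_nonneg fun x2 _ => hμ0 _ _ _
    have h1 : ∑ z, ∑ y, ∑ x2, μ z x2 y = 1 := by
      rw [← hμ1]
      exact Finset.sum_congr rfl fun x1 _ => Finset.sum_comm
    have hS := subadd_H2_cond (fun x1 y => ∑ x2, μ x1 x2 y) (fun z y => hν1 z y) h1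
    simp only [pairM_margAt₁ μ] at hS
    have e2 : (fun z => ∑ y, ∑ x2, μ z x2 y) = (fun x1 => ∑ x2, ∑ y, μ x1 x2 y) :=
      funext fun z => Finset.sum_comm
    rw [e2] at hS
    have e3 : ∀ (i : Fin n) (a : X1),
        (∑ c, ∑ b, margAt μ i a b c) = ∑ b, ∑ c, margAt μ i a b c :=
      fun i a => Finset.sum_comm
    simp only [e3] at hS
    simp only [miX2YcX1]
    have hs : ∀ i : Fin n,
        H2 (fun q : X1 × X2 => ∑ y, margAt μ i q.1 q.2 y)
          + H2 (fun q : X1 × Y => ∑ x2, margAt μ i q.1 x2 q.2)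
          - H2 (fun x1 : X1 => ∑ x2, ∑ y, margAt μ i x1 x2 y)
          - H2 (fun q : X1 × X2 × Y => margAt μ i q.1 q.2.1 q.2.2)
        = (H2 (fun q : X1 × Y => ∑ x2, margAt μ i q.1 x2 q.2)
            - H2 (fun x1 : X1 => ∑ x2, ∑ y, margAt μ i x1 x2 y))
          - ∑ a, ∑ b, ∑ c, -(margAt μ i a b c * Real.logb 2 (W a b c)) := by
      intro i
      rw [hsingle i]
      ring
    rw [Finset.sum_congr rfl fun i _ => hs i, Finset.sum_sub_distrib, hfull]
    linarith [hS]
  · -- Part 3 : I((X1,X2):Y)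
    have hf0 : ∀ y : Fin n → Y, (0:ℝ) ≤ ∑ x1, ∑ x2, μ x1 x2 y :=
      fun y => Finset.sum_nonneg fun x1 _ => Finset.sum_nonneg fun x2 _ => hμ0 _ _ _
    have h1 : ∑ y, ∑ x1, ∑ x2, μ x1 x2 y = 1 := by
      rw [show (∑ y, ∑ x1, ∑ x2, μ x1 x2 y) = ∑ x1, ∑ x2, ∑ y, μ x1 x2 y from
        (sum12_comm fun x1 x2 y => μ x1 x2 y).symm]
      exact hμ1
    have hS := subadd_H2 (fun y => ∑ x1, ∑ x2, μ x1 x2 y) hf0 h1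
    have emY : ∀ i : Fin n, margY (fun y => ∑ x1, ∑ x2, μ x1 x2 y) i
        = fun c => ∑ a, ∑ b, margAt μ i a b c :=
      fun i => funext fun c => margY_margAt μ i c
    simp only [emY] at hS
    simp only [miX1X2Y]
    have hs : ∀ i : Fin n,
        H2 (fun q : X1 × X2 => ∑ y, margAt μ i q.1 q.2 y)
          + H2 (fun y : Y => ∑ x1, ∑ x2, margAt μ i x1 x2 y)
          - H2 (fun q : X1 × X2 × Y => margAt μ i q.1 q.2.1 q.2.2)
        = H2 (fun y : Y => ∑ x1, ∑ x2, margAt μ i x1 x2 y)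
          - ∑ a, ∑ b, ∑ c, -(margAt μ i a b c * Real.logb 2 (W a b c)) := by
      intro i
      rw [hsingle i]
      ring
    rw [Finset.sum_congr rfl fun i _ => hs i, Finset.sum_sub_distrib, hfull]
    linarith [hS]
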